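/- arXiv:1912.06623 — 5 statements merged into one kernel-verified Lean document; each statement's English description precedes it below -/
import Mathlib

section
/- Let Ω ⊂ ℝⁿ be open and convex, u : Ω → ℝ twice differentiable, r₀ ∈ (0,1), and let Z(x,y) = u(r₀x+(1-r₀)y) - r₀u(x) - (1-r₀)u(y). If (x₀,y₀) is a local minimum of Z, then at z₀ = r₀x₀+(1-r₀)y₀ one has D²u(z₀) ≥ r₀ D²u(x₀) + (1-r₀) D²u(y₀) in the sense of quadratic forms, i.e., for every vector v ∈ ℝⁿ, vᵀD²u(z₀)v ≥ r₀ vᵀD²u(x₀)v + (1-r₀) vᵀD²u(y₀)v. -/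
open Filter Topology

lemma secondDeriv_nonneg_of_isLocalMin {f f' : ℝ → ℝ} {c : ℝ}
    (hf : ∀ᶠ t in 𝓝 (0:ℝ), HasDerivAt f (f' t) t)
    (hf' : HasDerivAt f' c 0) (hmin : IsLocalMin f 0) : 0 ≤ c := by
  by_contra h
  push_neg at h
  have h0 : f' 0 = 0 := by
    have h1 := hmin.deriv_eq_zero
    rwa [hf.self_of_nhds.deriv] at h1
  have hslope : Tendsto (slope f' 0) (𝓝[≠] (0:ℝ)) (𝓝 c) :=
    hasDerivAt_iff_tendsto_slope.mp hf'
  have hneg' : ∀ᶠ t in 𝓝[>] (0:ℝ), f' t < 0 := by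
    have hneg : ∀ᶠ t in 𝓝[>] (0:ℝ), slope f' 0 t < 0 :=
      (hslope.eventually (tendsto_id.eventually_lt_const h)).filter_mono
        (nhdsWithin_mono _ (fun t ht => ne_of_gt ht))
    filter_upwards [hneg, self_mem_nhdsWithin] with t ht ht0
    have hts : slope f' 0 t = f' t / t := by
      rw [slope_def_field, h0]; ring
    rw [hts] at ht
    by_contra hge
    push_neg at hge
    exact absurd (div_nonneg hge (le_of_lt ht0)) (not_le.mpr ht)
  obtain ⟨ε, hε, hE⟩ := Metric.eventually_nhds_iff.mp (hf.and hmin)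
  obtain ⟨ε2, hε2, hn⟩ := (nhdsGT_basis (0:ℝ)).eventually_iff.mp hneg'
  set δ := min ε ε2 / 2 with hδdef
  have hδ : 0 < δ := by positivity
  have hδε : δ < ε := by
    have : min ε ε2 ≤ ε := min_le_left _ _
    rw [hδdef]; linarith
  have hδε2 : δ < ε2 := by
    have : min ε ε2 ≤ ε2 := min_le_right _ _
    rw [hδdef]; linarith
  have hmem : ∀ t ∈ Set.Icc (0:ℝ) δ, dist t 0 < ε := by
    intro t ht
    rw [Real.dist_eq, sub_zero, abs_of_nonneg ht.1]
    exact lt_of_le_of_lt ht.2 hδε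
  have hanti : StrictAntiOn f (Set.Icc 0 δ) := by
    apply strictAntiOn_of_deriv_neg (convex_Icc 0 δ)
    · exact fun t ht => ((hE (hmem t ht)).1.continuousAt).continuousWithinAt
    · intro t ht
      rw [interior_Icc] at ht
      rw [(hE (hmem t (Set.mem_Icc_of_Ioo ht))).1.deriv]
      exact hn ⟨ht.1, lt_trans ht.2 hδε2⟩
  have hlt : f δ < f 0 :=
    hanti (Set.left_mem_Icc.mpr hδ.le) (Set.right_mem_Icc.mpr hδ.le) hδ
  have hge : f 0 ≤ f δ := (hE (by
    rw [Real.dist_eq, sub_zero, abs_of_nonneg hδ.le]; exact hδε)).2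
  linarith

/-- At a local minimum `(x₀,y₀)` of the concavity function
`Z(x,y) = u(r₀x+(1-r₀)y) - r₀u(x) - (1-r₀)u(y)`, one has
`D²u(z₀) ≥ r₀ D²u(x₀) + (1-r₀) D²u(y₀)` as quadratic forms,
where `z₀ = r₀x₀+(1-r₀)y₀`. -/
theorem stmt3 {n : ℕ}
    (Ω : Set (EuclideanSpace ℝ (Fin n)))
    (hΩo : IsOpen Ω) (hΩc : Convex ℝ Ω)
    (u : EuclideanSpace ℝ (Fin n) → ℝ)
    (hud : ∀ x ∈ Ω, DifferentiableAt ℝ u x)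
    (hud2 : ∀ x ∈ Ω, DifferentiableAt ℝ (fun y => fderiv ℝ u y) x)
    (r₀ : ℝ) (hr₀ : r₀ ∈ Set.Ioo (0:ℝ) 1)
    (x₀ y₀ : EuclideanSpace ℝ (Fin n)) (hx₀ : x₀ ∈ Ω) (hy₀ : y₀ ∈ Ω)
    (hmin : IsLocalMin
      (fun q : EuclideanSpace ℝ (Fin n) × EuclideanSpace ℝ (Fin n) =>
        u (r₀ • q.1 + (1 - r₀) • q.2) - r₀ * u q.1 - (1 - r₀) * u q.2)
      (x₀, y₀)) :
    ∀ v : EuclideanSpace ℝ (Fin n),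
      r₀ * fderiv ℝ (fun y => fderiv ℝ u y v) x₀ v
        + (1 - r₀) * fderiv ℝ (fun y => fderiv ℝ u y v) y₀ v
      ≤ fderiv ℝ (fun y => fderiv ℝ u y v) (r₀ • x₀ + (1 - r₀) • y₀) v := by
  intro v
  set z₀ : EuclideanSpace ℝ (Fin n) := r₀ • x₀ + (1 - r₀) • y₀ with hz₀def
  have hz₀ : z₀ ∈ Ω :=
    hΩc hx₀ hy₀ hr₀.1.le (show (0:ℝ) ≤ 1 - r₀ by linarith [hr₀.2]) (by ring)
  have hline : ∀ (p : EuclideanSpace ℝ (Fin n)) (t : ℝ),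
      HasDerivAt (fun s : ℝ => p + s • v) v t := by
    intro p t
    simpa using ((hasDerivAt_id t).smul_const v).const_add p
  set g : ℝ → ℝ := fun t =>
    u (z₀ + t • v) - r₀ * u (x₀ + t • v) - (1 - r₀) * u (y₀ + t • v) with hgdef
  set g' : ℝ → ℝ := fun t =>
    fderiv ℝ u (z₀ + t • v) v - r₀ * fderiv ℝ u (x₀ + t • v) v
      - (1 - r₀) * fderiv ℝ u (y₀ + t • v) v with hg'def
  have hDu : ∀ (p : EuclideanSpace ℝ (Fin n)), p ∈ Ω → ∀ t : ℝ, p + t • v ∈ Ω →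
      HasDerivAt (fun s : ℝ => u (p + s • v)) (fderiv ℝ u (p + t • v) v) t := by
    intro p _ t hpt
    exact (hud _ hpt).hasFDerivAt.comp_hasDerivAt t (hline p t)
  have hS : ∀ᶠ t in 𝓝 (0:ℝ), (z₀ + t • v ∈ Ω ∧ x₀ + t • v ∈ Ω) ∧ y₀ + t • v ∈ Ω := by
    have hc : ∀ p : EuclideanSpace ℝ (Fin n), p ∈ Ω →
        ∀ᶠ t in 𝓝 (0:ℝ), p + t • v ∈ Ω := by
      intro p hp
      have hcont : Continuous (fun t : ℝ => p + t • v) :=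
        continuous_const.add (continuous_id.smul continuous_const)
      have hmem : (fun t : ℝ => p + t • v) 0 ∈ Ω := by simpa
      exact hcont.continuousAt.preimage_mem_nhds (hΩo.mem_nhds hmem)
    exact ((hc z₀ hz₀).and (hc x₀ hx₀)).and (hc y₀ hy₀)
  have hgderiv : ∀ᶠ t in 𝓝 (0:ℝ), HasDerivAt g (g' t) t := by
    filter_upwards [hS] with t ht
    exact ((hDu z₀ hz₀ t ht.1.1).sub ((hDu x₀ hx₀ t ht.1.2).const_mul r₀)).sub
      ((hDu y₀ hy₀ t ht.2).const_mul (1 - r₀))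
  have hD2 : ∀ (p : EuclideanSpace ℝ (Fin n)), p ∈ Ω →
      HasDerivAt (fun s : ℝ => fderiv ℝ u (p + s • v) v)
        (fderiv ℝ (fun y => fderiv ℝ u y v) p v) 0 := by
    intro p hp
    have hdiff : DifferentiableAt ℝ (fun y => fderiv ℝ u y v) p :=
      (hud2 p hp).clm_apply (differentiableAt_const v)
    have hp' : HasFDerivAt (fun y => fderiv ℝ u y v)
        (fderiv ℝ (fun y => fderiv ℝ u y v) p) (p + (0:ℝ) • v) := by
      simpa using hdiff.hasFDerivAt
    have := hp'.comp_hasDerivAt 0 (hline p 0)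
    exact this
  have hg'deriv : HasDerivAt g'
      (fderiv ℝ (fun y => fderiv ℝ u y v) z₀ v
        - r₀ * fderiv ℝ (fun y => fderiv ℝ u y v) x₀ v
        - (1 - r₀) * fderiv ℝ (fun y => fderiv ℝ u y v) y₀ v) 0 :=
    ((hD2 z₀ hz₀).sub ((hD2 x₀ hx₀).const_mul r₀)).sub ((hD2 y₀ hy₀).const_mul (1 - r₀))
  have heq : ∀ t : ℝ, r₀ • (x₀ + t • v) + (1 - r₀) • (y₀ + t • v) = z₀ + t • v := by
    intro t; rw [hz₀def]; module
  have hgmin : IsLocalMin g 0 := by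
    have hcont : Continuous (fun t : ℝ =>
        ((x₀ + t • v, y₀ + t • v) : EuclideanSpace ℝ (Fin n) × EuclideanSpace ℝ (Fin n))) :=
      (continuous_const.add (continuous_id.smul continuous_const)).prodMk
        (continuous_const.add (continuous_id.smul continuous_const))
    have hγ : Filter.Tendsto (fun t : ℝ =>
        ((x₀ + t • v, y₀ + t • v) : EuclideanSpace ℝ (Fin n) × EuclideanSpace ℝ (Fin n)))
        (𝓝 0) (𝓝 (x₀, y₀)) :=
      hcont.tendsto' 0 (x₀, y₀) (by simp)
    have h1 := hγ.eventually hmin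
    filter_upwards [h1] with t ht
    have e1 : u (r₀ • x₀ + (1 - r₀) • y₀) - r₀ * u x₀ - (1 - r₀) * u y₀ = g 0 := by
      simp [hgdef, hz₀def]
    have e2 : u (r₀ • (x₀ + t • v) + (1 - r₀) • (y₀ + t • v))
        - r₀ * u (x₀ + t • v) - (1 - r₀) * u (y₀ + t • v) = g t := by
      rw [heq t]
    calc g 0 = _ := e1.symm
      _ ≤ _ := ht
      _ = g t := e2
  have hkey := secondDeriv_nonneg_of_isLocalMin hgderiv hg'deriv hgmin
  linarith
end

section
/- Let A_x, A_y, A_z be positive definite symmetric matrices on a subspace, and r₀ ∈ (0,1). Suppose that for all endomorphisms â, b̂ of the subspace, with ĉ := r₀â + (1-r₀)b̂, one has ĉᵀ A_z ĉ ≤ r₀ âᵀ A_x â + (1-r₀) b̂ᵀ A_y b̂ (as quadratic forms). Then r₀ A_x⁻¹ + (1-r₀) A_y⁻¹ ≤ A_z⁻¹ in the Loewner order. -/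
open Matrix

/-- The optimized second variation inequality: if for all endomorphisms
`â, b̂` (with `ĉ = r₀â + (1-r₀)b̂`) one has
`ĉᵀ A_z ĉ ≤ r₀ âᵀ A_x â + (1-r₀) b̂ᵀ A_y b̂`, then
`r₀ A_x⁻¹ + (1-r₀) A_y⁻¹ ≤ A_z⁻¹` in the Loewner order. -/
theorem stmt6 {n : ℕ}
    (Ax Ay Az : Matrix (Fin n) (Fin n) ℝ)
    (hAx : Ax.PosDef) (hAy : Ay.PosDef) (hAz : Az.PosDef)
    (r₀ : ℝ) (hr₀ : r₀ ∈ Set.Ioo (0:ℝ) 1)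
    (h : ∀ a b : Matrix (Fin n) (Fin n) ℝ,
      ((r₀ • ((a)ᵀ * Ax * a) + (1 - r₀) • ((b)ᵀ * Ay * b))
        - ((r₀ • a + (1 - r₀) • b)ᵀ * Az * (r₀ • a + (1 - r₀) • b))).PosSemidef) :
    (Az⁻¹ - (r₀ • Ax⁻¹ + (1 - r₀) • Ay⁻¹)).PosSemidef := by
  have hxt : Axᵀ = Ax := by simpa using hAx.isHermitian.eq
  have hyt : Ayᵀ = Ay := by simpa using hAy.isHermitian.eq
  have hzt : Azᵀ = Az := by simpa using hAz.isHermitian.eq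
  have hxinv : Ax⁻¹ᵀ = Ax⁻¹ := by rw [Matrix.transpose_nonsing_inv, hxt]
  have hyinv : Ay⁻¹ᵀ = Ay⁻¹ := by rw [Matrix.transpose_nonsing_inv, hyt]
  have hzinv : Az⁻¹ᵀ = Az⁻¹ := by rw [Matrix.transpose_nonsing_inv, hzt]
  have hxm : Ax⁻¹ * Ax = 1 := Matrix.nonsing_inv_mul _ hAx.det_pos.ne'.isUnit
  have hym : Ay⁻¹ * Ay = 1 := Matrix.nonsing_inv_mul _ hAy.det_pos.ne'.isUnit
  have hzm : Az⁻¹ * Az = 1 := Matrix.nonsing_inv_mul _ hAz.det_pos.ne'.isUnit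
  set C : Matrix (Fin n) (Fin n) ℝ := r₀ • Ax⁻¹ + (1 - r₀) • Ay⁻¹ with hC
  have hCt : Cᵀ = C := by
    simp [hC, Matrix.transpose_add, Matrix.transpose_smul, hxinv, hyinv]
  have h1 : (C - Cᵀ * Az * C).PosSemidef := by
    have := h Ax⁻¹ Ay⁻¹
    simpa [hxinv, hyinv, Matrix.mul_assoc, hxm, hym, ← hC] using this
  have h2 : ((Az⁻¹ - C)ᵀ * Az * (Az⁻¹ - C)).PosSemidef := by
    have : ((Az⁻¹ - C)ᴴ * Az * (Az⁻¹ - C)).PosSemidef :=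
      hAz.posSemidef.conjTranspose_mul_mul_same _
    simpa using this
  have hzm2 : Az * Az⁻¹ = 1 := Matrix.mul_nonsing_inv _ hAz.det_pos.ne'.isUnit
  have hz3 : ∀ X : Matrix (Fin n) (Fin n) ℝ, Az⁻¹ * (Az * X) = X := by
    intro X; rw [← Matrix.mul_assoc, hzm, Matrix.one_mul]
  have hz4 : ∀ X : Matrix (Fin n) (Fin n) ℝ, Az * (Az⁻¹ * X) = X := by
    intro X; rw [← Matrix.mul_assoc, hzm2, Matrix.one_mul]
  have key : Az⁻¹ - C = ((Az⁻¹ - C)ᵀ * Az * (Az⁻¹ - C)) + (C - Cᵀ * Az * C) := by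
    rw [Matrix.transpose_sub, hzinv, hCt]
    simp only [Matrix.sub_mul, Matrix.mul_sub, Matrix.mul_assoc, hzm, hzm2, hz3, hz4,
      Matrix.mul_one, Matrix.one_mul]
    abel
  rw [key]
  exact h2.add h1
end

section
/- Let Ω_t, t < T, be a family of convex subsets of ℝⁿ⁺¹ that is monotone decreasing in t (s < t implies Ω_t ⊂ Ω_s) and let u be the arrival time, u(p) = sup{t : p ∈ Ω_t}. If u is continuous on the interior and for each t the superlevel set {u > t} equals the interior of Ω_t and is convex, and if for every fixed t₀ the function w_{t₀}(q) := √(2(u(q) - t₀)) is concave on {u > t₀}, then u itself is concave on the set where u > -∞, provided u > -∞ everywhere and all superlevel sets are bounded. -/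
open Bornology

set_option maxHeartbeats 1000000 in
/-- Ancient-solutions step: if the arrival time `u` of a monotone family of
convex sets has convex bounded superlevel sets equal to the interiors of the
`Ω t`, and `√(2(u - t₀))` is concave on `{u > t₀}` for every `t₀`, then `u`
itself is concave on its domain. -/
theorem stmt8 {n : ℕ}
    (T : ℝ) (Ω : ℝ → Set (EuclideanSpace ℝ (Fin (n + 1))))
    (u : EuclideanSpace ℝ (Fin (n + 1)) → ℝ)
    (D : Set (EuclideanSpace ℝ (Fin (n + 1))))
    (hD : D = ⋃ t ∈ Set.Iio T, interior (Ω t))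
    (hconv : ∀ t < T, Convex ℝ (Ω t))
    (hmono : ∀ s t : ℝ, s < t → t < T → Ω t ⊆ Ω s)
    (hu : ∀ p ∈ D, u p = sSup {t | t < T ∧ p ∈ Ω t})
    (hcont : ContinuousOn u D)
    (hlevel : ∀ t < T, {p ∈ D | t < u p} = interior (Ω t) ∧
      Convex ℝ {p ∈ D | t < u p})
    (hbdd : ∀ t : ℝ, IsBounded {p ∈ D | t < u p})
    (hw : ∀ t₀ : ℝ, ConcaveOn ℝ {p ∈ D | t₀ < u p}
      (fun q => Real.sqrt (2 * (u q - t₀)))) :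
    ConcaveOn ℝ D u := by
  have hsub : ∀ s t : ℝ, s ≤ t → t < T → Ω t ⊆ Ω s := by
    intro s t hst htT
    rcases eq_or_lt_of_le hst with h | h
    · subst h; exact subset_rfl
    · exact hmono s t h htT
  have hDconv : Convex ℝ D := by
    intro x hx y hy a b ha hb hab
    rw [hD] at hx hy ⊢
    simp only [Set.mem_iUnion, Set.mem_Iio, exists_prop] at hx hy ⊢
    obtain ⟨t₁, ht₁, hx⟩ := hx
    obtain ⟨t₂, ht₂, hy⟩ := hy
    refine ⟨min t₁ t₂, lt_of_le_of_lt (min_le_left _ _) ht₁, ?_⟩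
    have h1 : interior (Ω t₁) ⊆ interior (Ω (min t₁ t₂)) :=
      interior_mono (hsub _ _ (min_le_left _ _) ht₁)
    have h2 : interior (Ω t₂) ⊆ interior (Ω (min t₁ t₂)) :=
      interior_mono (hsub _ _ (min_le_right _ _) ht₂)
    exact ((hconv _ (lt_of_le_of_lt (min_le_left _ _) ht₁)).interior) (h1 hx) (h2 hy) ha hb hab
  refine ⟨hDconv, ?_⟩
  intro x hx y hy a b ha hb hab
  simp only [smul_eq_mul]
  refine le_of_forall_pos_le_add ?_
  intro ε hε
  -- choose a very negative level t₀
  set c : ℝ := u x - u y with hc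
  set M : ℝ := c ^ 2 / ε with hM
  have hM0 : 0 ≤ M := by positivity
  set t₀ : ℝ := min T (min (u x) (u y)) - 1 - M with ht₀
  have ht₀T : t₀ < T := by
    have : min T (min (u x) (u y)) ≤ T := min_le_left _ _
    simp only [ht₀]; linarith
  have hax : 1 + M ≤ u x - t₀ := by
    have h1 : min T (min (u x) (u y)) ≤ u x :=
      le_trans (min_le_right _ _) (min_le_left _ _)
    simp only [ht₀]; linarith
  have hbx : 1 + M ≤ u y - t₀ := by
    have h1 : min T (min (u x) (u y)) ≤ u y :=
      le_trans (min_le_right _ _) (min_le_right _ _)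
    simp only [ht₀]; linarith
  have haxpos : (0:ℝ) < u x - t₀ := by linarith
  have hbxpos : (0:ℝ) < u y - t₀ := by linarith
  have hxS : x ∈ {p ∈ D | t₀ < u p} := ⟨hx, by linarith⟩
  have hyS : y ∈ {p ∈ D | t₀ < u p} := ⟨hy, by linarith⟩
  have hzS : a • x + b • y ∈ {p ∈ D | t₀ < u p} :=
    (hlevel t₀ ht₀T).2 hxS hyS ha hb hab
  have hcc := (hw t₀).2 hxS hyS ha hb hab
  simp only [smul_eq_mul] at hcc
  set z := a • x + b • y with hz
  set A : ℝ := Real.sqrt (2 * (u x - t₀)) with hA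
  set B : ℝ := Real.sqrt (2 * (u y - t₀)) with hB
  set sA : ℝ := Real.sqrt (u x - t₀) with hsA
  set sB : ℝ := Real.sqrt (u y - t₀) with hsB
  have hA0 : 0 ≤ A := Real.sqrt_nonneg _
  have hB0 : 0 ≤ B := Real.sqrt_nonneg _
  have hsA0 : 0 ≤ sA := Real.sqrt_nonneg _
  have hsB0 : 0 ≤ sB := Real.sqrt_nonneg _
  have hA2 : A ^ 2 = 2 * (u x - t₀) := Real.sq_sqrt (by linarith)
  have hB2 : B ^ 2 = 2 * (u y - t₀) := Real.sq_sqrt (by linarith)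
  have hsA2 : sA ^ 2 = u x - t₀ := Real.sq_sqrt (by linarith)
  have hsB2 : sB ^ 2 = u y - t₀ := Real.sq_sqrt (by linarith)
  have hAB : A * B = 2 * (sA * sB) := by
    rw [hA, hB, hsA, hsB, ← Real.sqrt_mul (by linarith), ← Real.sqrt_mul haxpos.le]
    rw [show 2 * (u x - t₀) * (2 * (u y - t₀)) = 2 ^ 2 * ((u x - t₀) * (u y - t₀)) by ring]
    rw [Real.sqrt_mul (by positivity), Real.sqrt_sq (by norm_num)]
  -- squaring the concavity inequality
  have hLHS0 : 0 ≤ a * A + b * B := by positivity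
  have hzsqrt : Real.sqrt (2 * (u z - t₀)) ^ 2 = 2 * (u z - t₀) :=
    Real.sq_sqrt (by have := hzS.2; linarith)
  have hsq : (a * A + b * B) ^ 2 ≤ 2 * (u z - t₀) := by
    rw [← hzsqrt]
    exact pow_le_pow_left₀ hLHS0 hcc 2
  -- error term bound: (sA - sB)^2 ≤ ε
  have hMε : M * ε = c ^ 2 := by
    rw [hM]; exact div_mul_cancel₀ _ hε.ne'
  have hcs : c = sA ^ 2 - sB ^ 2 := by rw [hsA2, hsB2, hc]; ring
  have hde : (sA - sB) ^ 2 * (sA + sB) ^ 2 = M * ε := by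
    rw [hMε, hcs]; ring
  have he2 : (2:ℝ) + 2 * M ≤ (sA + sB) ^ 2 := by
    nlinarith [mul_nonneg hsA0 hsB0]
  have hd0 : 0 ≤ (sA - sB) ^ 2 := sq_nonneg _
  have hdε : (sA - sB) ^ 2 ≤ ε := by
    by_contra hlt
    push_neg at hlt
    have hpos : (0:ℝ) < 2 + 2 * M := by linarith
    have k1 : ε * (2 + 2 * M) < (sA - sB) ^ 2 * (2 + 2 * M) :=
      mul_lt_mul_of_pos_right hlt hpos
    have k2 : (sA - sB) ^ 2 * (2 + 2 * M) ≤ (sA - sB) ^ 2 * (sA + sB) ^ 2 :=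
      mul_le_mul_of_nonneg_left he2 hd0
    rw [hde] at k2
    nlinarith [mul_nonneg hM0 hε.le]
  -- combine
  have hab1 : a * b ≤ 1 := by nlinarith
  have h1 : a * b * ((sA - sB) ^ 2) ≤ a * b * ε :=
    mul_le_mul_of_nonneg_left hdε (mul_nonneg ha hb)
  have h2 : a * b * ε ≤ ε := by nlinarith [hab1, hε.le]
  have hb' : b = 1 - a := by linarith
  have e2 : a ^ 2 * (u x - t₀) + b ^ 2 * (u y - t₀) + 2 * (a * b) * (sA * sB)
      ≤ u z - t₀ := by
    have expand : (a * A + b * B) ^ 2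
        = a ^ 2 * A ^ 2 + 2 * (a * b) * (A * B) + b ^ 2 * B ^ 2 := by ring
    rw [expand, hA2, hB2, hAB] at hsq
    linarith
  have e1 : a * (u x - t₀) + b * (u y - t₀)
      - (a ^ 2 * (u x - t₀) + b ^ 2 * (u y - t₀) + 2 * (a * b) * (sA * sB))
      = a * b * ((sA - sB) ^ 2) := by
    rw [hb', ← hsA2, ← hsB2]; ring
  have e3 : a * (u x - t₀) + b * (u y - t₀) = a * u x + b * u y - t₀ := by
    rw [hb']; ring
  linarith
end

section
/- Let u be twice differentiable with u > t₀ near a point p, and suppose in a suitable orthonormal basis (e₁,…,e_{n+1}) with e_{n+1} = ν the Hessian of u at p has block form D²u = [[-A/H, ∇H/H²],[∇H/H², -∂_tH/H³]] where H > 0. Set w = √(2(u - t₀)). Then for a vector V = λ(V^⊤ - Hν) with V^⊤ ∈ span(e₁,…,eₙ), one has w·D²w(V,V) = -(λ²/H)(∂_tH + H/(2(t-t₀)) + 2∇_{V^⊤}H + A(V^⊤,V^⊤)), where t = u(p). Consequently, D²w(p) ≤ 0 holds if and only if A(V^⊤,V^⊤) ≥ 0 for all tangent V^⊤ and ∂_tH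 + 2∇_VH + A(V,V) + H/(2(t-t₀)) ≥ 0 for all tangent V. -/
open Matrix

/-- The block Hessian `D²u` of the arrival time of a mean curvature flow, in
an orthonormal basis `(e₁,…,eₙ,ν)`. -/
noncomputable def hessArrival {n : ℕ} (A : Matrix (Fin n) (Fin n) ℝ) (gradH : Fin n → ℝ)
    (dtH H : ℝ) : Matrix (Fin n ⊕ Unit) (Fin n ⊕ Unit) ℝ :=
  Matrix.of fun i j =>
    match i, j with
    | Sum.inl i, Sum.inl j => -(A i j) / H
    | Sum.inl i, Sum.inr _ => gradH i / H ^ 2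
    | Sum.inr _, Sum.inl j => gradH j / H ^ 2
    | Sum.inr _, Sum.inr _ => -dtH / H ^ 3

lemma quad_aux {n : ℕ} (A : Matrix (Fin n) (Fin n) ℝ) (gradH : Fin n → ℝ)
    (dtH H w2 : ℝ)
    (a : Fin n → ℝ) (c : ℝ) :
    (Sum.elim a (fun _ => c)) ⬝ᵥ
      ((hessArrival A gradH dtH H - (1 / w2) • vecMulVec
        (Sum.elim (fun _ => (0:ℝ)) (fun _ => -1 / H))
        (Sum.elim (fun _ => (0:ℝ)) (fun _ => -1 / H))) *ᵥ Sum.elim a (fun _ => c))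
      = -(a ⬝ᵥ (A *ᵥ a)) / H + 2 * c * (gradH ⬝ᵥ a) / H ^ 2
        - c ^ 2 * (dtH / H ^ 3 + 1 / (w2 * H ^ 2)) := by
  simp only [hessArrival, dotProduct, mulVec, Matrix.sub_apply, Matrix.smul_apply,
    vecMulVec_apply, Fintype.sum_sum_type, Finset.univ_unique, Finset.sum_singleton,
    Sum.elim_inl, Sum.elim_inr, Matrix.of_apply, smul_eq_mul]
  ring_nf
  simp only [sub_zero, Finset.mul_sum, Finset.sum_add_distrib, mul_neg, neg_mul,
    ← Finset.sum_neg_distrib]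
  ring_nf
  have e1 : ∑ x : Fin n, H⁻¹ ^ 2 * c * a x * gradH x = ∑ x : Fin n, H⁻¹ ^ 2 * c * gradH x * a x :=
    Finset.sum_congr rfl fun x _ => by ring
  have e2 : ∑ x : Fin n, ∑ y : Fin n, -(a x * H⁻¹ * A x y * a y)
      = ∑ x : Fin n, ∑ y : Fin n, -(H⁻¹ * a x * A x y * a y) :=
    Finset.sum_congr rfl fun x _ => Finset.sum_congr rfl fun y _ => by ring
  rw [e1]; ring

/-- Equivalence of concavity of `√(2(u-t₀))` with Hamilton's differential
Harnack inequality for mean curvature flow: with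
`w D²w = D²u - Du ⊗ Du / w²` and `Du = -ν/H`, for `V = λ(V^⊤ - Hν)` one has
`w D²w(V,V) = -(λ²/H)(∂ₜH + H/(2(t-t₀)) + 2∇_{V^⊤}H + A(V^⊤,V^⊤))`, and
`D²w ≤ 0` iff `A ≥ 0` and the Harnack quantity is nonnegative. -/
theorem stmt12 {n : ℕ}
    (A : Matrix (Fin n) (Fin n) ℝ) (hA : A.IsSymm)
    (gradH : Fin n → ℝ) (dtH : ℝ) (H : ℝ) (hH : 0 < H)
    (t t₀ : ℝ) (ht : t₀ < t)
    (w : ℝ) (hw : w = Real.sqrt (2 * (t - t₀)))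
    (du : Fin n ⊕ Unit → ℝ)
    (hdu : du = Sum.elim (fun _ => (0:ℝ)) (fun _ => -1 / H))
    (W : Matrix (Fin n ⊕ Unit) (Fin n ⊕ Unit) ℝ)
    (hW : W = hessArrival A gradH dtH H - (1 / w ^ 2) • vecMulVec du du) :
    (∀ (l : ℝ) (Vt : Fin n → ℝ),
      (Sum.elim (fun i => l * Vt i) (fun _ => -(l * H))) ⬝ᵥ
          (W *ᵥ Sum.elim (fun i => l * Vt i) (fun _ => -(l * H)))
        = -(l ^ 2 / H) * (dtH + H / (2 * (t - t₀))
            + 2 * (gradH ⬝ᵥ Vt) + Vt ⬝ᵥ (A *ᵥ Vt))) ∧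
    ((-W).PosSemidef ↔
      (∀ Vt : Fin n → ℝ, 0 ≤ Vt ⬝ᵥ (A *ᵥ Vt)) ∧
      (∀ Vt : Fin n → ℝ,
        0 ≤ dtH + 2 * (gradH ⬝ᵥ Vt) + Vt ⬝ᵥ (A *ᵥ Vt) + H / (2 * (t - t₀)))) := by
  have hτ : (0:ℝ) < t - t₀ := sub_pos.mpr ht
  have hw2 : w ^ 2 = 2 * (t - t₀) := by
    rw [hw, Real.sq_sqrt (by linarith)]
  have hHne : H ≠ 0 := hH.ne'
  have hτne : t - t₀ ≠ 0 := hτ.ne'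
  subst hdu hW
  rw [hw2]
  -- the quadratic form in terms of (a, c)
  have quad : ∀ (a : Fin n → ℝ) (c : ℝ),
      (Sum.elim a (fun _ => c)) ⬝ᵥ
        ((hessArrival A gradH dtH H - (1 / (2 * (t - t₀))) • vecMulVec
          (Sum.elim (fun _ => (0:ℝ)) (fun _ => -1 / H))
          (Sum.elim (fun _ => (0:ℝ)) (fun _ => -1 / H))) *ᵥ Sum.elim a (fun _ => c))
        = -(a ⬝ᵥ (A *ᵥ a)) / H + 2 * c * (gradH ⬝ᵥ a) / H ^ 2
          - c ^ 2 * (dtH / H ^ 3 + 1 / ((2 * (t - t₀)) * H ^ 2)) :=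
    fun a c => quad_aux A gradH dtH H (2 * (t - t₀)) a c
  -- dot-product scaling facts
  have hdot_smul : ∀ (r : ℝ) (v : Fin n → ℝ), gradH ⬝ᵥ (fun i => r * v i) = r * (gradH ⬝ᵥ v) := by
    intro r v
    have hv : (fun i => r * v i) = r • v := rfl
    rw [hv, dotProduct_smul, smul_eq_mul]
  have hAq_smul : ∀ (r : ℝ) (v : Fin n → ℝ),
      (fun i => r * v i) ⬝ᵥ (A *ᵥ fun i => r * v i) = r ^ 2 * (v ⬝ᵥ (A *ᵥ v)) := by
    intro r v
    have hv : (fun i => r * v i) = r • v := rfl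
    rw [hv, mulVec_smul, dotProduct_smul, smul_dotProduct, smul_eq_mul, smul_eq_mul]
    ring
  have part1 : ∀ (l : ℝ) (Vt : Fin n → ℝ),
      (Sum.elim (fun i => l * Vt i) (fun _ => -(l * H))) ⬝ᵥ
          ((hessArrival A gradH dtH H - (1 / (2 * (t - t₀))) • vecMulVec
            (Sum.elim (fun _ => (0:ℝ)) (fun _ => -1 / H))
            (Sum.elim (fun _ => (0:ℝ)) (fun _ => -1 / H))) *ᵥ
            Sum.elim (fun i => l * Vt i) (fun _ => -(l * H)))
        = -(l ^ 2 / H) * (dtH + H / (2 * (t - t₀))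
            + 2 * (gradH ⬝ᵥ Vt) + Vt ⬝ᵥ (A *ᵥ Vt)) := by
    intro l Vt
    rw [quad (fun i => l * Vt i) (-(l * H)), hdot_smul, hAq_smul]
    field_simp
    ring
  refine ⟨part1, ?_, ?_⟩
  · -- PosSemidef → conditions
    intro h
    constructor
    · intro Vt
      have := h.dotProduct_mulVec_nonneg (Sum.elim Vt (fun _ => 0))
      rw [star_trivial, neg_mulVec, dotProduct_neg, quad Vt 0] at this
      have e : -(-(Vt ⬝ᵥ (A *ᵥ Vt)) / H + 2 * 0 * (gradH ⬝ᵥ Vt) / H ^ 2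
          - 0 ^ 2 * (dtH / H ^ 3 + 1 / ((2 * (t - t₀)) * H ^ 2))) = Vt ⬝ᵥ (A *ᵥ Vt) / H := by ring
      rw [e] at this
      have h2 := mul_nonneg hH.le this
      have e2 : H * (Vt ⬝ᵥ (A *ᵥ Vt) / H) = Vt ⬝ᵥ (A *ᵥ Vt) := by field_simp
      rw [e2] at h2; linarith
    · intro Vt
      have := h.dotProduct_mulVec_nonneg (Sum.elim (fun i => 1 * Vt i) (fun _ => -(1 * H)))
      rw [star_trivial, neg_mulVec, dotProduct_neg, part1 1 Vt] at this
      have h2 : 0 ≤ (dtH + H / (2 * (t - t₀)) + 2 * (gradH ⬝ᵥ Vt) + Vt ⬝ᵥ (A *ᵥ Vt)) / H := by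
        rw [neg_mul, one_pow, neg_neg] at this
        calc (0:ℝ) ≤ 1 / H * (dtH + H / (2 * (t - t₀)) + 2 * (gradH ⬝ᵥ Vt) + Vt ⬝ᵥ (A *ᵥ Vt)) := this
          _ = _ := by ring
      have h3 := mul_nonneg hH.le h2
      have e3 : H * ((dtH + H / (2 * (t - t₀)) + 2 * (gradH ⬝ᵥ Vt) + Vt ⬝ᵥ (A *ᵥ Vt)) / H)
          = dtH + H / (2 * (t - t₀)) + 2 * (gradH ⬝ᵥ Vt) + Vt ⬝ᵥ (A *ᵥ Vt) := by
        field_simp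
      rw [e3] at h3; linarith
  · -- conditions → PosSemidef
    rintro ⟨hA0, hHar⟩
    refine PosSemidef.of_dotProduct_mulVec_nonneg ?_ ?_
    · -- Hermitian
      have hAs : ∀ i j, A j i = A i j := fun i j => hA.apply i j
      unfold Matrix.IsHermitian
      ext i j
      rcases i with i | i <;> rcases j with j | j <;>
        simp [hessArrival, conjTranspose_apply, vecMulVec_apply, hAs, mul_comm]
    · intro x
      rw [star_trivial, neg_mulVec, dotProduct_neg]
      set a : Fin n → ℝ := fun i => x (Sum.inl i) with ha
      set c : ℝ := x (Sum.inr ()) with hc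
      have hx : x = Sum.elim a (fun _ => c) := by
        funext i; rcases i with i | ⟨⟩ <;> rfl
      rw [hx, quad a c]
      rcases eq_or_ne c 0 with hc0 | hc0
      · rw [hc0]
        have e : -(-(a ⬝ᵥ (A *ᵥ a)) / H + 2 * 0 * (gradH ⬝ᵥ a) / H ^ 2
            - 0 ^ 2 * (dtH / H ^ 3 + 1 / ((2 * (t - t₀)) * H ^ 2))) = a ⬝ᵥ (A *ᵥ a) / H := by ring
        rw [e]
        exact div_nonneg (hA0 a) hH.le
      · have hv := hHar (fun i => -(H / c) * a i)
        rw [hdot_smul, hAq_smul] at hv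
        have key : 0 ≤ (c ^ 2 / H ^ 3) *
            (dtH + 2 * (-(H / c) * (gradH ⬝ᵥ a)) + (-(H / c)) ^ 2 * (a ⬝ᵥ (A *ᵥ a))
              + H / (2 * (t - t₀))) :=
          mul_nonneg (by positivity) hv
        have heq : (c ^ 2 / H ^ 3) *
            (dtH + 2 * (-(H / c) * (gradH ⬝ᵥ a)) + (-(H / c)) ^ 2 * (a ⬝ᵥ (A *ᵥ a))
              + H / (2 * (t - t₀)))
            = -(-(a ⬝ᵥ (A *ᵥ a)) / H + 2 * c * (gradH ⬝ᵥ a) / H ^ 2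
              - c ^ 2 * (dtH / H ^ 3 + 1 / ((2 * (t - t₀)) * H ^ 2))) := by
          field_simp
          ring
        linarith [key.trans_eq heq]
end

section
/- Let Ω ⊂ ℝ^{n+1} be a (possibly unbounded) convex open set, α > 0, and let u : Ω → ℝ be twice differentiable with bounded superlevel sets {u > t} for all t, such that for each t ∈ ℝ the function w_t := ((1+α)(u - t))^{1/(1+α)} is concave on {u > t}. Then for every p ∈ Ω and every t < u(p), D²u(p) ≤ α/((1+α)(u(p)-t)) · Du(p) ⊗ Du(p) in the Loewner order; taking t → -∞, D²u(p) ≤ 0, so u is concave. -/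
open Bornology Filter Topology Set

lemma hasDerivAt_comp_line {E : Type*} [NormedAddCommGroup E] [NormedSpace ℝ E]
    {F : E → ℝ} {p v : E} {s : ℝ} (hF : DifferentiableAt ℝ F (p + s • v)) :
    HasDerivAt (fun r : ℝ => F (p + r • v)) (fderiv ℝ F (p + s • v) v) s := by
  have h1 : HasDerivAt (fun r : ℝ => p + r • v) v s := by
    simpa using ((hasDerivAt_id s).smul_const v).const_add p
  exact hF.hasFDerivAt.comp_hasDerivAt s h1

lemma second_deriv_nonpos_of_concaveOn {S : Set ℝ} (hSo : IsOpen S) {g g' : ℝ → ℝ} {x : ℝ} {c : ℝ}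
    (hx : x ∈ S) (hc : ConcaveOn ℝ S g)
    (hd : ∀ s ∈ S, HasDerivAt g (g' s) s)
    (hd2 : HasDerivAt g' c x) : c ≤ 0 := by
  have hanti : AntitoneOn g' S := by
    have h := hc.antitoneOn_deriv (fun s hs => (hd s hs).differentiableAt)
    intro a ha b hb hab
    have := h ha hb hab
    rwa [(hd a ha).deriv, (hd b hb).deriv] at this
  have hslope : Tendsto (slope g' x) (𝓝[>] x) (𝓝 c) :=
    ((hasDerivAt_iff_tendsto_slope).1 hd2).mono_left
      (nhdsWithin_mono x fun y hy => ne_of_gt hy)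
  refine le_of_tendsto hslope ?_
  have hS : S ∈ 𝓝[>] x := nhdsWithin_le_nhds (hSo.mem_nhds hx)
  filter_upwards [hS, self_mem_nhdsWithin] with y hyS (hxy : x < y)
  have hle := hanti hx hyS hxy.le
  rw [slope_def_field]
  exact div_nonpos_of_nonpos_of_nonneg (sub_nonpos.2 hle) (sub_pos.2 hxy).le

lemma alg_aux {α β c X K D2 : ℝ} (hα : 0 < α) (hβ1 : β * (1 + α) = 1)
    (hc : 0 < c) (hX : 0 < X)
    (h : β * ((β - 1) * (X / c) * ((1 + α) * K)) * ((1 + α) * K)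
      + β * X * ((1 + α) * D2) ≤ 0) :
    D2 ≤ α / c * K ^ 2 := by
  have e1 : β * (β - 1) * ((1 + α) * (1 + α)) = -α := by
    linear_combination (β * (1 + α) - α) * hβ1
  have htot : -α * (X / c) * K ^ 2 + X * D2 ≤ 0 := by
    have heq : -α * (X / c) * K ^ 2 + X * D2
        = β * ((β - 1) * (X / c) * ((1 + α) * K)) * ((1 + α) * K)
          + β * X * ((1 + α) * D2) := by
      linear_combination (-(X / c * K ^ 2)) * e1 - X * D2 * hβ1
    rw [heq]; exact h
  have hfin : X * D2 ≤ X * (α / c * K ^ 2) := by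
    have hh : α * (X / c) * K ^ 2 = X * (α / c * K ^ 2) := by ring
    linarith
  exact le_of_mul_le_mul_left hfin hX

/-- Second part of Theorem 3: if `w_t = ((1+α)(u-t))^{1/(1+α)}` is concave on
`{u > t}` for every `t`, and the superlevel sets of `u` are bounded, then for
every `p` and `t < u(p)` one has
`D²u(p) ≤ α/((1+α)(u(p)-t)) Du(p) ⊗ Du(p)`, hence `D²u(p) ≤ 0` and `u` is
concave. -/
theorem stmt19 {n : ℕ}
    (Ω : Set (EuclideanSpace ℝ (Fin (n + 1))))
    (hΩo : IsOpen Ω) (hΩc : Convex ℝ Ω)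
    (α : ℝ) (hα : 0 < α)
    (u : EuclideanSpace ℝ (Fin (n + 1)) → ℝ)
    (hud : ∀ x ∈ Ω, DifferentiableAt ℝ u x)
    (hud2 : ∀ x ∈ Ω, DifferentiableAt ℝ (fun y => fderiv ℝ u y) x)
    (hbdd : ∀ t : ℝ, IsBounded {q ∈ Ω | t < u q})
    (hconc : ∀ t : ℝ, ConcaveOn ℝ {q ∈ Ω | t < u q}
      (fun q => ((1 + α) * (u q - t)) ^ ((1 + α)⁻¹))) :
    (∀ p ∈ Ω, ∀ t < u p, ∀ v : EuclideanSpace ℝ (Fin (n + 1)),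
      fderiv ℝ (fun y => fderiv ℝ u y v) p v
        ≤ α / ((1 + α) * (u p - t)) * (fderiv ℝ u p v) ^ 2) ∧
    (∀ p ∈ Ω, ∀ v : EuclideanSpace ℝ (Fin (n + 1)),
      fderiv ℝ (fun y => fderiv ℝ u y v) p v ≤ 0) ∧
    ConcaveOn ℝ Ω u := by
  have h1α : (0:ℝ) < 1 + α := by linarith
  set β : ℝ := (1 + α)⁻¹ with hβdef
  have hβ1 : β * (1 + α) = 1 := inv_mul_cancel₀ (ne_of_gt h1α)
  -- Part 1
  have key : ∀ p ∈ Ω, ∀ t < u p, ∀ v : EuclideanSpace ℝ (Fin (n + 1)),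
      fderiv ℝ (fun y => fderiv ℝ u y v) p v
        ≤ α / ((1 + α) * (u p - t)) * (fderiv ℝ u p v) ^ 2 := by
    intro p hp t ht v
    set U : Set (EuclideanSpace ℝ (Fin (n+1))) := {q ∈ Ω | t < u q} with hUdef
    have hUo : IsOpen U := by
      rw [isOpen_iff_mem_nhds]
      rintro q ⟨hqΩ, hqt⟩
      have h1 : Ω ∈ 𝓝 q := hΩo.mem_nhds hqΩ
      have h2 : u ⁻¹' Set.Ioi t ∈ 𝓝 q :=
        (hud q hqΩ).continuousAt.preimage_mem_nhds (Ioi_mem_nhds hqt)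
      filter_upwards [h1, h2] with z hz1 hz2
      exact ⟨hz1, hz2⟩
    set γ : ℝ → EuclideanSpace ℝ (Fin (n+1)) := fun s => p + s • v with hγdef
    have hγcont : Continuous γ := by fun_prop
    set S : Set ℝ := γ ⁻¹' U with hSdef
    have hSo : IsOpen S := hUo.preimage hγcont
    have hγ0 : γ 0 = p := by simp [hγdef]
    have h0S : (0:ℝ) ∈ S := by
      show γ 0 ∈ U
      rw [hγ0]
      exact ⟨hp, ht⟩
    have haff : ∀ (s1 s2 a b : ℝ), a + b = 1 →
        γ (a * s1 + b * s2) = a • γ s1 + b • γ s2 := by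
      intro s1 s2 a b hab
      have ha' : a = 1 - b := by linarith
      subst ha'
      simp only [hγdef, smul_add, smul_smul]
      module
    set m : ℝ → ℝ := fun s => (1 + α) * (u (γ s) - t) with hmdef
    have hgconc : ConcaveOn ℝ S (fun s => m s ^ β) := by
      constructor
      · intro s1 hs1 s2 hs2 a b ha hb hab
        have hmem : a • γ s1 + b • γ s2 ∈ U := (hconc t).1 hs1 hs2 ha hb hab
        show γ (a • s1 + b • s2) ∈ U
        rw [smul_eq_mul, smul_eq_mul, haff s1 s2 a b hab]
        exact hmem
      · intro s1 hs1 s2 hs2 a b ha hb hab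
        have h2 := (hconc t).2 hs1 hs2 ha hb hab
        have heq : γ (a • s1 + b • s2) = a • γ s1 + b • γ s2 := by
          rw [smul_eq_mul, smul_eq_mul]; exact haff s1 s2 a b hab
        simp only [hmdef]
        rw [heq]
        exact h2
    set f' : ℝ → ℝ := fun s => fderiv ℝ u (γ s) v with hf'def
    have hmemS : ∀ s ∈ S, γ s ∈ Ω ∧ t < u (γ s) := fun s hs => hs
    have hfd : ∀ s ∈ S, HasDerivAt (fun r => u (γ r)) (f' s) s :=
      fun s hs => hasDerivAt_comp_line (hud _ (hmemS s hs).1)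
    have hmpos : ∀ s ∈ S, 0 < m s := fun s hs => mul_pos h1α (sub_pos.2 (hmemS s hs).2)
    have hmd : ∀ s ∈ S, HasDerivAt m ((1 + α) * f' s) s :=
      fun s hs => ((hfd s hs).sub_const t).const_mul (1 + α)
    set G : ℝ → ℝ := fun s => β * m s ^ (β - 1) * ((1 + α) * f' s) with hGdef
    have hgd : ∀ s ∈ S, HasDerivAt (fun r => m r ^ β) (G s) s := by
      intro s hs
      have hr := Real.hasDerivAt_rpow_const (x := m s) (p := β) (Or.inl (hmpos s hs).ne')
      have := hr.comp s (hmd s hs)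
      simpa [hGdef, Function.comp_def, mul_assoc] using this
    -- second derivative of G at 0
    have hF2 : DifferentiableAt ℝ (fun y => fderiv ℝ u y v) p :=
      (hud2 p hp).clm_apply (differentiableAt_const v)
    have hf'd : HasDerivAt f' (fderiv ℝ (fun y => fderiv ℝ u y v) p v) 0 := by
      have := hasDerivAt_comp_line (F := fun y => fderiv ℝ u y v) (p := p) (v := v) (s := 0)
        (by simpa using hF2)
      simpa using this
    set D2 : ℝ := fderiv ℝ (fun y => fderiv ℝ u y v) p v with hD2def
    set K : ℝ := fderiv ℝ u p v with hKdef
    have hf'0 : f' 0 = K := by rw [hf'def]; simp only [hγ0]; rfl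
    have hm0 : m 0 = (1 + α) * (u p - t) := by rw [hmdef]; simp only [hγ0]
    set c : ℝ := (1 + α) * (u p - t) with hcdef
    have hcpos : 0 < c := mul_pos h1α (sub_pos.2 ht)
    have hrp : HasDerivAt (fun s => m s ^ (β - 1))
        ((β - 1) * m 0 ^ (β - 1 - 1) * ((1 + α) * f' 0)) 0 := by
      have hr := Real.hasDerivAt_rpow_const (x := m 0) (p := β - 1)
        (Or.inl (hmpos 0 h0S).ne')
      have := hr.comp 0 (hmd 0 h0S)
      simpa [Function.comp_def, mul_assoc] using this
    have hGd : HasDerivAt G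
        ((β * ((β - 1) * m 0 ^ (β - 1 - 1) * ((1 + α) * f' 0))) * ((1 + α) * f' 0)
          + (β * m 0 ^ (β - 1)) * ((1 + α) * D2)) 0 := by
      have h1 : HasDerivAt (fun s => β * m s ^ (β - 1))
          (β * ((β - 1) * m 0 ^ (β - 1 - 1) * ((1 + α) * f' 0))) 0 := hrp.const_mul β
      have h2 : HasDerivAt (fun s => (1 + α) * f' s) ((1 + α) * D2) 0 := hf'd.const_mul (1 + α)
      exact h1.mul h2
    have hc₀ : (β * ((β - 1) * m 0 ^ (β - 1 - 1) * ((1 + α) * f' 0))) * ((1 + α) * f' 0)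
          + (β * m 0 ^ (β - 1)) * ((1 + α) * D2) ≤ 0 :=
      second_deriv_nonpos_of_concaveOn hSo h0S hgconc hgd hGd
    -- algebra
    rw [hf'0, hm0] at hc₀
    set X : ℝ := c ^ (β - 1) with hXdef
    have hXpos : 0 < X := Real.rpow_pos_of_pos hcpos _
    have hXc : c ^ (β - 1 - 1) = X / c := by
      rw [hXdef, show β - 1 - 1 = (β - 1) + (-1) by ring, Real.rpow_add hcpos,
        Real.rpow_neg_one, div_eq_mul_inv]
    rw [hXc] at hc₀
    exact alg_aux hα hβ1 hcpos hXpos hc₀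
  refine ⟨key, ?_⟩
  -- Part 2
  have key2 : ∀ p ∈ Ω, ∀ v : EuclideanSpace ℝ (Fin (n + 1)),
      fderiv ℝ (fun y => fderiv ℝ u y v) p v ≤ 0 := by
    intro p hp v
    set K : ℝ := (fderiv ℝ u p v) ^ 2 with hKdef
    have hK0 : 0 ≤ K := sq_nonneg _
    by_contra hcon
    push_neg at hcon
    set ε : ℝ := fderiv ℝ (fun y => fderiv ℝ u y v) p v with hεdef
    set t : ℝ := u p - (α * K + 1) / ((1 + α) * (ε / 2)) with htdef
    have hε2 : 0 < ε / 2 := by linarith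
    have htlt : t < u p := by
      have : 0 < (α * K + 1) / ((1 + α) * (ε / 2)) := by positivity
      rw [htdef]; linarith
    have h := key p hp t htlt v
    have hupt : (1 + α) * (u p - t) = (α * K + 1) / (ε / 2) := by
      rw [htdef]
      field_simp
      ring
    rw [hupt] at h
    have hbound : α / ((α * K + 1) / (ε / 2)) * K ≤ ε / 2 := by
      rw [div_div_eq_mul_div]
      have h1 : α * (ε / 2) / (α * K + 1) * K = (ε / 2) * (α * K) / (α * K + 1) := by ring
      rw [h1, div_le_iff₀ (by positivity)]
      nlinarith
    have : ε ≤ ε / 2 := le_trans h hbound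
    linarith
  refine ⟨key2, ?_⟩
  -- Part 3
  constructor
  · exact hΩc
  · intro x hx y hy a b ha hb hab
    set v : EuclideanSpace ℝ (Fin (n+1)) := y - x with hvdef
    set γ : ℝ → EuclideanSpace ℝ (Fin (n+1)) := fun s => x + s • v with hγdef
    have hγcont : Continuous γ := by fun_prop
    set S : Set ℝ := γ ⁻¹' Ω with hSdef
    have hSo : IsOpen S := hΩo.preimage hγcont
    have haff : ∀ (s1 s2 c d : ℝ), c + d = 1 →
        γ (c * s1 + d * s2) = c • γ s1 + d • γ s2 := by
      intro s1 s2 c d hcd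
      have hc' : c = 1 - d := by linarith
      subst hc'
      simp only [hγdef, smul_add, smul_smul]
      module
    have hconvS : Convex ℝ S := by
      intro s1 hs1 s2 hs2 c d hc hd hcd
      show γ (c • s1 + d • s2) ∈ Ω
      rw [smul_eq_mul, smul_eq_mul, haff s1 s2 c d hcd]
      exact hΩc hs1 hs2 hc hd hcd
    have hfd : ∀ s ∈ S, HasDerivAt (fun r => u (γ r)) (fderiv ℝ u (γ s) v) s :=
      fun s hs => hasDerivAt_comp_line (hud _ hs)
    have hf'd : ∀ s ∈ S, HasDerivAt (deriv (fun r => u (γ r)))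
        (fderiv ℝ (fun y => fderiv ℝ u y v) (γ s) v) s := by
      intro s hs
      have h1 : HasDerivAt (fun r => fderiv ℝ u (γ r) v)
          (fderiv ℝ (fun y => fderiv ℝ u y v) (γ s) v) s :=
        hasDerivAt_comp_line ((hud2 _ hs).clm_apply (differentiableAt_const v))
      refine h1.congr_of_eventuallyEq ?_
      filter_upwards [hSo.mem_nhds hs] with r hr
      exact (hfd r hr).deriv
    have hconcg : ConcaveOn ℝ S (fun r => u (γ r)) := by
      apply concaveOn_of_deriv2_nonpos' hconvS
      · exact fun s hs => (hfd s hs).differentiableAt.differentiableWithinAt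
      · exact fun s hs => (hf'd s hs).differentiableAt.differentiableWithinAt
      · intro s hs
        have h2 : deriv (deriv (fun r => u (γ r))) s
            = fderiv ℝ (fun y => fderiv ℝ u y v) (γ s) v := (hf'd s hs).deriv
        show deriv^[2] (fun r => u (γ r)) s ≤ 0
        have h3 : deriv^[2] (fun r => u (γ r)) s = deriv (deriv (fun r => u (γ r))) s := rfl
        rw [h3, h2]
        exact key2 (γ s) hs v
    have hγ0 : γ 0 = x := by simp [hγdef]
    have hγ1 : γ 1 = y := by simp [hγdef, hvdef]
    have h0S : (0:ℝ) ∈ S := by show γ 0 ∈ Ω; rw [hγ0]; exact hx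
    have h1S : (1:ℝ) ∈ S := by show γ 1 ∈ Ω; rw [hγ1]; exact hy
    have hmain := hconcg.2 h0S h1S ha hb hab
    have e2 : γ (a • (0:ℝ) + b • 1) = a • x + b • y := by
      rw [smul_eq_mul, smul_eq_mul, haff 0 1 a b hab, hγ0, hγ1]
    simp only [hγ0, hγ1, e2] at hmain
    exact hmain
end
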